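/- Let n₁, n₂ ≥ 2 and suppose α₁, α₂ > 0 realize the minimum of the entropy √((n₁-1)²/α₁² + (n₂-1)²/α₂²) under α₁^{n₁}α₂^{n₂} = 1. Then the metric g_{α₁,α₂} = α₁²g₀¹ ⊕ α₂²g₀² on H^{n₁} × H^{n₂} is Einstein if and only if n₁ = n₂. -/

import Mathlib

open Real

/-- At the entropy-minimizing scaling constants, the product metric
`g_{α₁,α₂} = α₁²g₀¹ ⊕ α₂²g₀²` on `H^{n₁} × H^{n₂}` (whose Einstein condition is
`(n₁-1)/α₁² = (n₂-1)/α₂²`) is Einstein iff `n₁ = n₂`. -/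
theorem stmt_3 (n₁ n₂ : ℕ) (hn₁ : 2 ≤ n₁) (hn₂ : 2 ≤ n₂)
    (α₁ α₂ : ℝ) (hα₁ : 0 < α₁) (hα₂ : 0 < α₂)
    (hconstraint : α₁ ^ n₁ * α₂ ^ n₂ = 1)
    (hmin : ∀ β₁ β₂ : ℝ, 0 < β₁ → 0 < β₂ → β₁ ^ n₁ * β₂ ^ n₂ = 1 →
      Real.sqrt (((n₁ : ℝ) - 1) ^ 2 / α₁ ^ 2 + ((n₂ : ℝ) - 1) ^ 2 / α₂ ^ 2)
        ≤ Real.sqrt (((n₁ : ℝ) - 1) ^ 2 / β₁ ^ 2 + ((n₂ : ℝ) - 1) ^ 2 / β₂ ^ 2)) :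
    (((n₁ : ℝ) - 1) / α₁ ^ 2 = ((n₂ : ℝ) - 1) / α₂ ^ 2) ↔ n₁ = n₂ := by
  have hn₁' : (1 : ℝ) < (n₁ : ℝ) := by exact_mod_cast Nat.lt_of_lt_of_le one_lt_two hn₁
  have hn₂' : (1 : ℝ) < (n₂ : ℝ) := by exact_mod_cast Nat.lt_of_lt_of_le one_lt_two hn₂
  set A : ℝ := ((n₁ : ℝ) - 1) ^ 2 with hA
  set B : ℝ := ((n₂ : ℝ) - 1) ^ 2 with hB
  have hApos : 0 < A := by rw [hA]; nlinarith
  have hBpos : 0 < B := by rw [hB]; nlinarith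
  set c : ℝ := A / α₁ ^ 2 with hc
  set d : ℝ := B / α₂ ^ 2 with hd
  have hcpos : 0 < c := by positivity
  have hdpos : 0 < d := by positivity
  set k : ℝ := (n₁ : ℝ) / (n₂ : ℝ) with hk
  have hkpos : 0 < k := by positivity
  -- the function along the constraint curve
  set φ : ℝ → ℝ := fun t => c * t ^ (-2 : ℝ) + d * t ^ (2 * k) with hφ
  -- φ has a local min at 1
  have hmin1 : IsLocalMin φ 1 := by
    have hmem : Set.Ioi (0:ℝ) ∈ nhds (1:ℝ) := Ioi_mem_nhds one_pos
    refine Filter.eventually_of_mem hmem fun t ht => ?_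
    have ht0 : (0:ℝ) < t := ht
    have hβ₂ : (0:ℝ) < α₂ * t ^ (-k) := by positivity
    have hcon : (α₁ * t) ^ n₁ * (α₂ * t ^ (-k)) ^ n₂ = 1 := by
      have h1 : (t ^ (-k)) ^ n₂ = t ^ ((-k) * (n₂:ℝ)) := by
        rw [← Real.rpow_natCast (t ^ (-k)) n₂, ← Real.rpow_mul ht0.le]
      have h2 : (-k) * (n₂:ℝ) = -(n₁:ℝ) := by
        rw [hk, neg_mul, div_mul_cancel₀ _ (ne_of_gt (by linarith : (0:ℝ) < n₂))]
      rw [mul_pow, mul_pow, h1, h2]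
      have h3 : t ^ (-(n₁:ℝ)) = (t ^ n₁)⁻¹ := by
        rw [Real.rpow_neg ht0.le, Real.rpow_natCast]
      rw [h3]
      have htn : (t:ℝ) ^ n₁ ≠ 0 := by positivity
      rw [show α₁ ^ n₁ * t ^ n₁ * (α₂ ^ n₂ * (t ^ n₁)⁻¹)
          = (α₁ ^ n₁ * α₂ ^ n₂) * (t ^ n₁ * (t ^ n₁)⁻¹) from by ring,
        hconstraint, mul_inv_cancel₀ htn, one_mul]
    have := hmin (α₁ * t) (α₂ * t ^ (-k)) (by positivity) hβ₂ hcon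
    have hsq : A / α₁ ^ 2 + B / α₂ ^ 2 ≤ A / (α₁ * t) ^ 2 + B / (α₂ * t ^ (-k)) ^ 2 := by
      rwa [Real.sqrt_le_sqrt_iff (by positivity)] at this
    have he1 : A / (α₁ * t) ^ 2 = c * t ^ (-2 : ℝ) := by
      rw [Real.rpow_neg ht0.le, Real.rpow_two]
      field_simp [hc, mul_pow]
      rw [hc]; field_simp
    have he2 : B / (α₂ * t ^ (-k)) ^ 2 = d * t ^ (2 * k) := by
      have : (t ^ (-k)) ^ 2 = t ^ (-(2*k)) := by
        rw [← Real.rpow_natCast (t ^ (-k)) 2, ← Real.rpow_mul ht0.le]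
        norm_num
        ring_nf
      rw [mul_pow, this, Real.rpow_neg ht0.le]
      have h4 : (0:ℝ) < t ^ (2*k) := Real.rpow_pos_of_pos ht0 _
      field_simp [hd]
      rw [hd]; field_simp
    have hφ1 : φ 1 = c + d := by simp [hφ]
    have hφt : φ t = A / (α₁ * t) ^ 2 + B / (α₂ * t ^ (-k)) ^ 2 := by
      rw [he1, he2]
    rw [hφ1, hφt]
    calc c + d = A / α₁ ^ 2 + B / α₂ ^ 2 := by rw [hc, hd]
    _ ≤ _ := hsq
  -- derivative at 1
  have hD : HasDerivAt φ (c * (-2) + d * (2 * k)) 1 := by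
    have h1 : HasDerivAt (fun t : ℝ => t ^ (-2:ℝ)) (-2 * (1:ℝ) ^ ((-2:ℝ) - 1)) 1 :=
      Real.hasDerivAt_rpow_const (Or.inl one_ne_zero)
    have h2 : HasDerivAt (fun t : ℝ => t ^ (2*k)) ((2*k) * (1:ℝ) ^ ((2*k) - 1)) 1 :=
      Real.hasDerivAt_rpow_const (Or.inl one_ne_zero)
    have h3 := (h1.const_mul c).add (h2.const_mul d)
    rw [hφ]
    refine h3.congr_deriv ?_
    simp [Real.one_rpow]
  have hfoc : c * (-2) + d * (2 * k) = 0 := hmin1.hasDerivAt_eq_zero hD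
  -- FOC: c = k * d, i.e. n₂ * A * α₂² = n₁ * B * α₁²
  have hckd : c = k * d := by linarith
  have hα₁2 : (0:ℝ) < α₁ ^ 2 := by positivity
  have hα₂2 : (0:ℝ) < α₂ ^ 2 := by positivity
  have hn₂0 : (n₂:ℝ) ≠ 0 := by positivity
  have hFOC : (n₂:ℝ) * A * α₂ ^ 2 = (n₁:ℝ) * B * α₁ ^ 2 := by
    rw [hc, hd, hk] at hckd
    field_simp at hckd
    linear_combination hckd
  constructor
  · intro hE
    have hE' : ((n₁:ℝ) - 1) * α₂ ^ 2 = ((n₂:ℝ) - 1) * α₁ ^ 2 := by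
      field_simp at hE; linarith
    have h5 : (((n₂:ℝ)-1) * α₁^2) * ((n₁:ℝ) - (n₂:ℝ)) = 0 := by
      rw [hA, hB] at hFOC
      linear_combination hFOC - (n₂:ℝ)*((n₁:ℝ)-1) * hE'
    have h6 : ((n₂:ℝ)-1) * α₁^2 ≠ 0 := ne_of_gt (by nlinarith)
    have key : (n₁ : ℝ) = (n₂ : ℝ) := by
      have := (mul_eq_zero.mp h5).resolve_left h6
      linarith
    exact_mod_cast key
  · intro h
    subst h
    have hab : α₂ ^ 2 = α₁ ^ 2 := by
      rw [hA, hB] at hFOC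
      have hn : (0:ℝ) < (n₁:ℝ) * ((n₁:ℝ) - 1)^2 := by positivity
      nlinarith
    rw [hab]
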